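/- Suppose for every eigenvalue λ_ℓ of the normalized graph Laplacian L̃ the scaling functions satisfy |α̂(λ_ℓ/2^J)|² + Σ_{r=1}^K |β̂^{(r)}(λ_ℓ/2^J)|² = 1 and |α̂(λ_ℓ/2^{l+1})|² = |α̂(λ_ℓ/2^l)|² + Σ_{r=1}^K |β̂^{(r)}(λ_ℓ/2^l)|² for l = 1,…,J−1. Then the undecimated framelet system {φ_{1,p}} ∪ {ψ^{(r)}_{l,p}} is a tight frame: ‖f‖² = Σ_p |⟨f, φ_{1,p}⟩|² + Σ_{l=1}^J Σ_{r=1}^K Σ_p |⟨f, ψ^{(r)}_{l,p}⟩|² for every f ∈ l₂(G). -/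

import Mathlib

open BigOperators

/-- Auxiliary: for a family `w p v = ∑ ℓ g ℓ * u ℓ p * u ℓ v` with `u` orthonormal,
`∑ p ⟪f, w p⟫² = ∑ ℓ (g ℓ)² ⟪f, u ℓ⟫²`. -/
lemma framelet_sum_sq {N : ℕ} (u : Fin N → EuclideanSpace ℝ (Fin N))
    (hu : Orthonormal ℝ u) (g : Fin N → ℝ) (w : Fin N → EuclideanSpace ℝ (Fin N))
    (hw : ∀ p v, w p v = ∑ ℓ, g ℓ * u ℓ p * u ℓ v) (f : EuclideanSpace ℝ (Fin N)) :
    ∑ p, (inner ℝ f (w p) : ℝ) ^ 2 = ∑ ℓ, (g ℓ) ^ 2 * (inner ℝ f (u ℓ) : ℝ) ^ 2 := by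
  have hip : ∀ p, (inner ℝ f (w p) : ℝ) = ∑ ℓ, g ℓ * (inner ℝ f (u ℓ) : ℝ) * u ℓ p := by
    intro p
    simp only [PiLp.inner_apply, RCLike.inner_apply, conj_trivial, hw,
      Finset.mul_sum, Finset.sum_mul]
    rw [Finset.sum_comm]
    exact Finset.sum_congr rfl fun ℓ _ => Finset.sum_congr rfl fun x _ => by ring
  have huu : ∀ i j : Fin N, (∑ p, u i p * u j p) = if i = j then (1 : ℝ) else 0 := by
    intro i j
    have := orthonormal_iff_ite.mp hu i j
    rw [PiLp.inner_apply] at this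
    simpa [mul_comm] using this
  calc ∑ p, (inner ℝ f (w p) : ℝ) ^ 2
      = ∑ p, ∑ i, ∑ j, (g i * (inner ℝ f (u i) : ℝ)) * (g j * (inner ℝ f (u j) : ℝ))
          * (u i p * u j p) := by
        refine Finset.sum_congr rfl fun p _ => ?_
        rw [hip, sq, Finset.sum_mul_sum]
        refine Finset.sum_congr rfl fun i _ => Finset.sum_congr rfl fun j _ => by ring
    _ = ∑ i, ∑ j, (g i * (inner ℝ f (u i) : ℝ)) * (g j * (inner ℝ f (u j) : ℝ))
          * (∑ p, u i p * u j p) := by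
        rw [Finset.sum_comm]
        refine Finset.sum_congr rfl fun i _ => ?_
        rw [Finset.sum_comm]
        simp [Finset.mul_sum]
    _ = ∑ ℓ, (g ℓ) ^ 2 * (inner ℝ f (u ℓ) : ℝ) ^ 2 := by
        refine Finset.sum_congr rfl fun i _ => ?_
        rw [Finset.sum_eq_single i]
        · rw [huu]; simp; ring
        · intro j _ hj; rw [huu]; simp [(Ne.symm hj)]
        · intro h; simp at h

/-- Partition-of-unity conditions on the spectrum imply the undecimated framelet
system `{φ_{1,p}} ∪ {ψ^{(r)}_{l,p}}` is a tight frame: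
`‖f‖² = Σ_p |⟨f,φ_{1,p}⟩|² + Σ_{l=1}^J Σ_r Σ_p |⟨f,ψ^{(r)}_{l,p}⟩|²`. -/
theorem stmt_7 (N K J : ℕ) (hJ : 1 ≤ J)
    (u : Fin N → EuclideanSpace ℝ (Fin N)) (hu : Orthonormal ℝ u)
    (lam : Fin N → ℝ) (αhat : ℝ → ℝ) (βhat : Fin K → ℝ → ℝ)
    (φ : ℕ → Fin N → EuclideanSpace ℝ (Fin N))
    (hφ : ∀ l p v, φ l p v = ∑ ℓ, αhat (lam ℓ / 2 ^ l) * u ℓ p * u ℓ v)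
    (ψ : Fin K → ℕ → Fin N → EuclideanSpace ℝ (Fin N))
    (hψ : ∀ r l p v, ψ r l p v = ∑ ℓ, βhat r (lam ℓ / 2 ^ l) * u ℓ p * u ℓ v)
    (hnorm : ∀ ℓ, αhat (lam ℓ / 2 ^ J) ^ 2 + ∑ r, βhat r (lam ℓ / 2 ^ J) ^ 2 = 1)
    (h2scale : ∀ ℓ, ∀ l ∈ Finset.Icc 1 (J - 1),
      αhat (lam ℓ / 2 ^ (l + 1)) ^ 2 =
        αhat (lam ℓ / 2 ^ l) ^ 2 + ∑ r, βhat r (lam ℓ / 2 ^ l) ^ 2) :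
    ∀ f : EuclideanSpace ℝ (Fin N),
      ‖f‖ ^ 2 = (∑ p, (inner ℝ f (φ 1 p) : ℝ) ^ 2) +
        ∑ l ∈ Finset.Icc 1 J, ∑ r, ∑ p, (inner ℝ f (ψ r l p) : ℝ) ^ 2 := by
  intro f
  -- rewrite each block via the auxiliary lemma
  have hφs : ∑ p, (inner ℝ f (φ 1 p) : ℝ) ^ 2
      = ∑ ℓ, (αhat (lam ℓ / 2 ^ 1)) ^ 2 * (inner ℝ f (u ℓ) : ℝ) ^ 2 :=
    framelet_sum_sq u hu _ (φ 1) (hφ 1) f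
  have hψs : ∀ r l, ∑ p, (inner ℝ f (ψ r l p) : ℝ) ^ 2
      = ∑ ℓ, (βhat r (lam ℓ / 2 ^ l)) ^ 2 * (inner ℝ f (u ℓ) : ℝ) ^ 2 :=
    fun r l => framelet_sum_sq u hu _ (ψ r l) (hψ r l) f
  -- the telescoping identity
  have key : ∀ ℓ, (αhat (lam ℓ / 2 ^ 1)) ^ 2
      + ∑ l ∈ Finset.Icc 1 J, ∑ r, (βhat r (lam ℓ / 2 ^ l)) ^ 2 = 1 := by
    intro ℓ
    have tele : ∀ m, 1 ≤ m → m ≤ J →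
        (αhat (lam ℓ / 2 ^ 1)) ^ 2
          + ∑ l ∈ Finset.Icc 1 (m - 1), ∑ r, (βhat r (lam ℓ / 2 ^ l)) ^ 2
        = (αhat (lam ℓ / 2 ^ m)) ^ 2 := by
      intro m
      induction m with
      | zero => omega
      | succ n ih =>
        intro _ hle
        rcases Nat.lt_or_ge n 1 with h1 | hn1
        · have hn0 : n = 0 := by omega
          subst hn0
          simp
        · have hnJ : n ∈ Finset.Icc 1 (J - 1) := by
            rw [Finset.mem_Icc]; omega
          have hsplit : ∑ l ∈ Finset.Icc 1 (n + 1 - 1), ∑ r, (βhat r (lam ℓ / 2 ^ l)) ^ 2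
              = (∑ l ∈ Finset.Icc 1 (n - 1), ∑ r, (βhat r (lam ℓ / 2 ^ l)) ^ 2)
                + ∑ r, (βhat r (lam ℓ / 2 ^ n)) ^ 2 := by
            have h2 : n + 1 - 1 = (n - 1) + 1 := by omega
            rw [h2, Finset.sum_Icc_succ_top (by omega : 1 ≤ (n - 1) + 1)]
            rw [show n - 1 + 1 = n from by omega]
          rw [hsplit, ← add_assoc, ih hn1 (by omega), ← h2scale ℓ n hnJ]
    have hsplit : ∑ l ∈ Finset.Icc 1 J, ∑ r, (βhat r (lam ℓ / 2 ^ l)) ^ 2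
        = (∑ l ∈ Finset.Icc 1 (J - 1), ∑ r, (βhat r (lam ℓ / 2 ^ l)) ^ 2)
          + ∑ r, (βhat r (lam ℓ / 2 ^ J)) ^ 2 := by
      rw [show J = (J - 1) + 1 from by omega, Finset.sum_Icc_succ_top (by omega : 1 ≤ (J - 1) + 1)]
      rw [show J - 1 + 1 = J from by omega]
    rw [hsplit, ← add_assoc, tele J hJ (le_refl J), hnorm ℓ]
  -- Parseval
  have hN : ‖f‖ ^ 2 = ∑ ℓ, (inner ℝ f (u ℓ) : ℝ) ^ 2 := by
    rcases Nat.eq_zero_or_pos N with h0 | h0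
    · subst h0
      have : f = 0 := Subsingleton.elim f 0
      simp [this]
    · have : Nonempty (Fin N) := ⟨⟨0, h0⟩⟩
      have hcard : Fintype.card (Fin N) = Module.finrank ℝ (EuclideanSpace ℝ (Fin N)) := by
        simp
      let b : OrthonormalBasis (Fin N) ℝ (EuclideanSpace ℝ (Fin N)) :=
        (basisOfOrthonormalOfCardEqFinrank hu hcard).toOrthonormalBasis
          (by rwa [coe_basisOfOrthonormalOfCardEqFinrank])
      have hb : ∀ i, b i = u i := by
        intro i
        have : (b : Fin N → EuclideanSpace ℝ (Fin N)) = u := by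
          rw [Module.Basis.coe_toOrthonormalBasis, coe_basisOfOrthonormalOfCardEqFinrank]
        exact congrFun this i
      have := b.sum_inner_mul_inner f f
      rw [← real_inner_self_eq_norm_sq]
      rw [← this]
      refine Finset.sum_congr rfl fun i _ => ?_
      rw [hb, sq, real_inner_comm (u i) f]
  rw [hN, hφs]
  have : ∑ l ∈ Finset.Icc 1 J, ∑ r, ∑ p, (inner ℝ f (ψ r l p) : ℝ) ^ 2
      = ∑ ℓ, (∑ l ∈ Finset.Icc 1 J, ∑ r, (βhat r (lam ℓ / 2 ^ l)) ^ 2)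
          * (inner ℝ f (u ℓ) : ℝ) ^ 2 := by
    calc ∑ l ∈ Finset.Icc 1 J, ∑ r, ∑ p, (inner ℝ f (ψ r l p) : ℝ) ^ 2
        = ∑ l ∈ Finset.Icc 1 J, ∑ ℓ, ∑ r,
            (βhat r (lam ℓ / 2 ^ l)) ^ 2 * (inner ℝ f (u ℓ) : ℝ) ^ 2 := by
          refine Finset.sum_congr rfl fun l _ => ?_
          simp only [hψs]
          exact Finset.sum_comm
      _ = ∑ ℓ, ∑ l ∈ Finset.Icc 1 J, ∑ r,
            (βhat r (lam ℓ / 2 ^ l)) ^ 2 * (inner ℝ f (u ℓ) : ℝ) ^ 2 := Finset.sum_comm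
      _ = ∑ ℓ, (∑ l ∈ Finset.Icc 1 J, ∑ r, (βhat r (lam ℓ / 2 ^ l)) ^ 2)
            * (inner ℝ f (u ℓ) : ℝ) ^ 2 := by
          refine Finset.sum_congr rfl fun ℓ _ => ?_
          simp only [Finset.sum_mul]
  rw [this, ← Finset.sum_add_distrib]
  refine Finset.sum_congr rfl fun ℓ _ => ?_
  rw [← add_mul, key ℓ, one_mul]
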